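/- Let q_0,...,q_n be a nonnegative log-concave sequence with interval support and let ν_1,...,ν_n be Bernoulli laws with parameters p_e ∈ (0,1). Define a measure μ on {0,1}^n by μ(η) = C q_{|η|} Π_e p_e^{η(e)} (1−p_e)^{1−η(e)}, where |η| = Σ_e η(e) (a rank rescaling of a product of Bernoullis). Then any two distinct coordinates X_e, X_f are negatively correlated under μ: E_μ[X_e X_f] ≤ E_μ[X_e] E_μ[X_f]. -/
import Mathlib


open Finset

/-- Number of coordinates equal to `true`. -/
def rankB {m : ℕ} (η : Fin m → Bool) : ℕ := (univ.filter (fun i => η i = true)).card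

namespace Stmt19Aux

/-- nonnegative, log-concave, interval support -/
def LC (h : ℕ → ℝ) : Prop :=
  (∀ k, 0 ≤ h k) ∧ (∀ j, h j * h (j + 2) ≤ h (j + 1) ^ 2) ∧
  (∀ i j k, i ≤ j → j ≤ k → 0 < h i → 0 < h k → 0 < h j)

lemma LC.spread {h : ℕ → ℝ} (H : LC h) :
    ∀ d x, h x * h (x + d + 2) ≤ h (x + 1) * h (x + d + 1) := by
  obtain ⟨h0, hlc, hint⟩ := H
  intro d
  induction d with
  | zero => intro x; simpa [sq] using hlc x
  | succ d ih =>
    intro x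
    rcases (h0 x).eq_or_lt with hx | hx
    · rw [← hx, zero_mul]; exact mul_nonneg (h0 _) (h0 _)
    rcases (h0 (x + (d + 1) + 2)).eq_or_lt with hy | hy
    · rw [← hy, mul_zero]; exact mul_nonneg (h0 _) (h0 _)
    have hpos : ∀ j, x ≤ j → j ≤ x + (d + 1) + 2 → 0 < h j := fun j h1 h2 =>
      hint x j _ h1 h2 hx hy
    have hC : 0 < h (x + d + 1) := hpos _ (by omega) (by omega)
    have hD : 0 < h (x + d + 2) := hpos _ (by omega) (by omega)
    have h1 := ih x
    have h2 : h (x + d + 1) * h (x + d + 3) ≤ h (x + d + 2) ^ 2 := by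
      have := hlc (x + d + 1)
      have e1 : x + d + 1 + 2 = x + d + 3 := by omega
      have e2 : x + d + 1 + 1 = x + d + 2 := by omega
      rwa [e1, e2] at this
    have e3 : x + (d + 1) + 2 = x + d + 3 := by omega
    have e4 : x + (d + 1) + 1 = x + d + 2 := by omega
    rw [e3, e4]
    nlinarith [mul_le_mul h1 h2 (mul_nonneg (h0 _) (h0 _)) (mul_nonneg (h0 _) (h0 _)),
      mul_pos hC hD, h0 x, h0 (x + 1), h0 (x + d + 3)]

lemma LC.mix {h : ℕ → ℝ} (H : LC h) {p : ℝ} (hp0 : 0 < p) (hp1 : p < 1) :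
    LC (fun c => (1 - p) * h c + p * h (c + 1)) := by
  obtain ⟨h0, hlc, hint⟩ := H
  refine ⟨fun k => add_nonneg (mul_nonneg (by linarith) (h0 _)) (mul_nonneg hp0.le (h0 _)),
    fun j => ?_, fun i j k hij hjk hi hk => ?_⟩
  · have hs : h j * h (j + 3) ≤ h (j + 1) * h (j + 2) := by
      have := LC.spread ⟨h0, hlc, hint⟩ 1 j
      have e1 : j + 1 + 2 = j + 3 := by omega
      have e2 : j + 1 + 1 = j + 2 := by omega
      rwa [e1, e2] at this
    have h2 : h (j + 1) * h (j + 3) ≤ h (j + 2) ^ 2 := by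
      have := hlc (j + 1)
      have e1 : j + 1 + 2 = j + 3 := by omega
      have e2 : j + 1 + 1 = j + 2 := by omega
      rwa [e1, e2] at this
    simp only []
    have e1 : j + 2 + 1 = j + 3 := by omega
    have e2 : j + 1 + 1 = j + 2 := by omega
    rw [e1, e2]
    nlinarith [mul_le_mul_of_nonneg_left (hlc j) (sq_nonneg (1 - p)),
      mul_le_mul_of_nonneg_left h2 (sq_nonneg p),
      mul_le_mul_of_nonneg_left hs (mul_nonneg hp0.le (by linarith : (0:ℝ) ≤ 1 - p))]
  · simp only [] at hi hk ⊢
    rcases eq_or_lt_of_le hij with rfl | hij'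
    · exact hi
    rcases eq_or_lt_of_le hjk with rfl | hjk'
    · exact hk
    have hi' : 0 < h i ∨ 0 < h (i + 1) := by
      rcases (h0 i).eq_or_lt with hz | hz
      · right
        rcases (h0 (i + 1)).eq_or_lt with hz2 | hz2
        · exfalso; rw [← hz, ← hz2] at hi; simp at hi
        · exact hz2
      · exact Or.inl hz
    have hk' : 0 < h k ∨ 0 < h (k + 1) := by
      rcases (h0 k).eq_or_lt with hz | hz
      · right
        rcases (h0 (k + 1)).eq_or_lt with hz2 | hz2
        · exfalso; rw [← hz, ← hz2] at hk; simp at hk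
        · exact hz2
      · exact Or.inl hz
    have hj : 0 < h j := by
      rcases hi' with hi' | hi' <;> rcases hk' with hk' | hk'
      · exact hint i j k (by omega) (by omega) hi' hk'
      · exact hint i j (k + 1) (by omega) (by omega) hi' hk'
      · exact hint (i + 1) j k (by omega) (by omega) hi' hk'
      · exact hint (i + 1) j (k + 1) (by omega) (by omega) hi' hk'
    have hp1' : 0 < (1 - p) * h j := mul_pos (by linarith) hj
    have hp2' : 0 ≤ p * h (j + 1) := mul_nonneg hp0.le (h0 _)
    linarith

lemma insert_sdiff_insert' {α : Type*} [DecidableEq α] {a : α} {s A : Finset α} (ha : a ∉ s) :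
    insert a s \ insert a A = s \ A := by
  ext i
  simp only [Finset.mem_sdiff, Finset.mem_insert, not_or]
  constructor
  · rintro ⟨(rfl | h1), h2, h3⟩
    · exact absurd rfl h2
    · exact ⟨h1, h3⟩
  · rintro ⟨h1, h2⟩
    exact ⟨Or.inr h1, fun e => ha (e ▸ h1), h2⟩

/-- extension of `q` by zero beyond `n` -/
def Qext (n : ℕ) (q : ℕ → ℝ) : ℕ → ℝ := fun k => if k ≤ n then q k else 0

lemma LC_Qext (n : ℕ) (q : ℕ → ℝ) (hq0 : ∀ k, 0 ≤ q k)
    (hlc1 : ∀ j, j + 2 ≤ n → q j * q (j + 2) ≤ q (j + 1) ^ 2)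
    (hlc2 : ∀ i j k, i ≤ j → j ≤ k → k ≤ n → 0 < q i → 0 < q k → 0 < q j) :
    LC (Qext n q) := by
  refine ⟨fun k => ?_, fun j => ?_, fun i j k hij hjk hi hk => ?_⟩
  · unfold Qext; split
    · exact hq0 k
    · exact le_refl 0
  · by_cases hj : j + 2 ≤ n
    · have h1 : j ≤ n := by omega
      have h2 : j + 1 ≤ n := by omega
      simp only [Qext, if_pos h1, if_pos h2, if_pos hj]
      exact hlc1 j hj
    · have : Qext n q (j + 2) = 0 := by simp [Qext, hj]
      rw [this, mul_zero]
      exact sq_nonneg _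
  · have hkn : k ≤ n := by
      by_contra h
      simp [Qext, h] at hk
    have hjn : j ≤ n := le_trans hjk hkn
    have hin : i ≤ n := le_trans hij hjn
    simp only [Qext, if_pos hin] at hi
    simp only [Qext, if_pos hkn] at hk
    simp only [Qext, if_pos hjn]
    exact hlc2 i j k hij hjk hkn hi hk

/-- the weight of a configuration (as a subset) -/
def Tw (n : ℕ) (q : ℕ → ℝ) (p : Fin n → ℝ) (S : Finset (Fin n)) : ℝ :=
  Qext n q S.card * (∏ i ∈ S, p i) * ∏ i ∈ univ \ S, (1 - p i)

/-- partition function with rank shifted by `c`, over subsets of `R` -/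
def Fc (n : ℕ) (q : ℕ → ℝ) (p : Fin n → ℝ) (R : Finset (Fin n)) (c : ℕ) : ℝ :=
  ∑ A ∈ R.powerset, Qext n q (A.card + c) * (∏ i ∈ A, p i) * ∏ i ∈ R \ A, (1 - p i)

lemma LC_Fc {n : ℕ} (q : ℕ → ℝ) (p : Fin n → ℝ) (HQ : LC (Qext n q))
    (hp : ∀ i, 0 < p i ∧ p i < 1) (t : Finset (Fin n)) :
    LC (Fc n q p t) := by
  unfold Fc
  induction t using Finset.induction_on with
  | empty =>
    have hfun : (fun c => ∑ A ∈ (∅ : Finset (Fin n)).powerset,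
        Qext n q (A.card + c) * (∏ i ∈ A, p i) * ∏ i ∈ (∅ : Finset (Fin n)) \ A, (1 - p i))
        = fun c => Qext n q c := by
      funext c; simp
    rw [hfun]; exact HQ
  | @insert a s ha ih =>
    have key : ∀ c, (∑ A ∈ (insert a s).powerset,
        Qext n q (A.card + c) * (∏ i ∈ A, p i) * ∏ i ∈ insert a s \ A, (1 - p i))
        = (1 - p a) * (∑ A ∈ s.powerset,
            Qext n q (A.card + c) * (∏ i ∈ A, p i) * ∏ i ∈ s \ A, (1 - p i))
          + p a * (∑ A ∈ s.powerset,
              Qext n q (A.card + (c + 1)) * (∏ i ∈ A, p i) * ∏ i ∈ s \ A, (1 - p i)) := by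
      intro c
      rw [Finset.sum_powerset_insert ha, Finset.mul_sum, Finset.mul_sum]
      congr 1
      · refine Finset.sum_congr rfl fun A hA => ?_
        have hAs : A ⊆ s := Finset.mem_powerset.1 hA
        have haA : a ∉ A := fun h => ha (hAs h)
        have h1 : insert a s \ A = insert a (s \ A) := Finset.insert_sdiff_of_notMem _ haA
        have h2 : a ∉ s \ A := fun h => ha (Finset.mem_sdiff.1 h).1
        rw [h1, Finset.prod_insert h2]
        ring
      · refine Finset.sum_congr rfl fun A hA => ?_
        have hAs : A ⊆ s := Finset.mem_powerset.1 hA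
        have haA : a ∉ A := fun h => ha (hAs h)
        rw [insert_sdiff_insert' ha, Finset.card_insert_of_notMem haA,
          Finset.prod_insert haA]
        have e1 : A.card + 1 + c = A.card + (c + 1) := by omega
        rw [e1]
        ring
    have hfun : (fun c => ∑ A ∈ (insert a s).powerset,
        Qext n q (A.card + c) * (∏ i ∈ A, p i) * ∏ i ∈ insert a s \ A, (1 - p i))
        = fun c => (1 - p a) * ((fun c => ∑ A ∈ s.powerset,
            Qext n q (A.card + c) * (∏ i ∈ A, p i) * ∏ i ∈ s \ A, (1 - p i)) c)
          + p a * ((fun c => ∑ A ∈ s.powerset,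
            Qext n q (A.card + c) * (∏ i ∈ A, p i) * ∏ i ∈ s \ A, (1 - p i)) (c + 1)) := by
      funext c; exact key c
    rw [hfun]
    exact ih.mix (hp a).1 (hp a).2

lemma sum_eta_eq (n : ℕ) (G : Finset (Fin n) → ℝ) :
    ∑ η : Fin n → Bool, G (univ.filter fun i => η i = true) = ∑ S : Finset (Fin n), G S := by
  have hbij : Function.Bijective (fun η : Fin n → Bool => univ.filter fun i => η i = true) := by
    refine Function.bijective_iff_has_inverse.mpr ⟨fun S i => decide (i ∈ S), ?_, ?_⟩
    · intro η; funext i; simp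
    · intro S; ext i; simp
  exact Fintype.sum_bijective _ hbij _ _ fun η => rfl

lemma sum_finset_decomp (n : ℕ) (e f : Fin n) (hef : e ≠ f) (G : Finset (Fin n) → ℝ) :
    ∑ S : Finset (Fin n), G S
      = ∑ A ∈ ((univ \ {e, f} : Finset (Fin n))).powerset,
          (G A + G (insert f A) + (G (insert e A) + G (insert e (insert f A)))) := by
  have hfR : f ∉ (univ \ {e, f} : Finset (Fin n)) := by simp
  have heR : e ∉ insert f (univ \ {e, f} : Finset (Fin n)) := by simp [hef]
  have huniv : (univ : Finset (Fin n)) = insert e (insert f (univ \ {e, f})) := by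
    ext i
    by_cases h1 : i = e <;> by_cases h2 : i = f <;> simp [h1, h2]
  calc ∑ S : Finset (Fin n), G S = ∑ S ∈ (univ : Finset (Fin n)).powerset, G S := by
        rw [Finset.powerset_univ]
    _ = _ := by
        conv_lhs => rw [huniv]
        rw [Finset.sum_powerset_insert heR, Finset.sum_powerset_insert hfR,
          Finset.sum_powerset_insert hfR, ← Finset.sum_add_distrib, ← Finset.sum_add_distrib,
          ← Finset.sum_add_distrib]

lemma Tvals {n : ℕ} (q : ℕ → ℝ) (p : Fin n → ℝ) {e f : Fin n} (hef : e ≠ f)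
    {A : Finset (Fin n)} (hA : A ⊆ univ \ {e, f}) :
    Tw n q p A = (1 - p e) * ((1 - p f) *
        (Qext n q A.card * (∏ i ∈ A, p i) * ∏ i ∈ (univ \ {e, f}) \ A, (1 - p i)))
  ∧ Tw n q p (insert f A) = (1 - p e) * (p f *
        (Qext n q (A.card + 1) * (∏ i ∈ A, p i) * ∏ i ∈ (univ \ {e, f}) \ A, (1 - p i)))
  ∧ Tw n q p (insert e A) = p e * ((1 - p f) *
        (Qext n q (A.card + 1) * (∏ i ∈ A, p i) * ∏ i ∈ (univ \ {e, f}) \ A, (1 - p i)))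
  ∧ Tw n q p (insert e (insert f A)) = p e * (p f *
        (Qext n q (A.card + 2) * (∏ i ∈ A, p i) * ∏ i ∈ (univ \ {e, f}) \ A, (1 - p i))) := by
  have heA : e ∉ A := fun h => by simpa using hA h
  have hfA : f ∉ A := fun h => by simpa using hA h
  have hfRA : f ∉ (univ \ ({e, f} : Finset (Fin n))) \ A := by simp
  have heRA : e ∉ (univ \ ({e, f} : Finset (Fin n))) \ A := by simp
  have heFRA : e ∉ insert f ((univ \ ({e, f} : Finset (Fin n))) \ A) := by simp [hef]
  have heFA : e ∉ insert f A := by simp [hef, heA]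
  have c0 : univ \ A = insert e (insert f ((univ \ ({e, f} : Finset (Fin n))) \ A)) := by
    ext i
    by_cases h1 : i = e
    · subst h1; simp [heA]
    by_cases h2 : i = f
    · subst h2; simp [hfA]
    · simp [h1, h2]
  have c1f : univ \ insert f A = insert e ((univ \ ({e, f} : Finset (Fin n))) \ A) := by
    ext i
    by_cases h1 : i = e
    · subst h1; simp [hef, heA]
    by_cases h2 : i = f
    · subst h2; simp [Ne.symm hef]
    · simp [h1, h2]
  have c1e : univ \ insert e A = insert f ((univ \ ({e, f} : Finset (Fin n))) \ A) := by
    ext i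
    by_cases h1 : i = e
    · subst h1; simp [hef]
    by_cases h2 : i = f
    · subst h2; simp [Ne.symm hef, hfA]
    · simp [h1, h2]
  have c2 : univ \ insert e (insert f A) = (univ \ ({e, f} : Finset (Fin n))) \ A := by
    ext i
    by_cases h1 : i = e
    · subst h1; simp
    by_cases h2 : i = f
    · subst h2; simp
    · simp [h1, h2]
  refine ⟨?_, ?_, ?_, ?_⟩
  · rw [Tw, c0, Finset.prod_insert heFRA, Finset.prod_insert hfRA]
    ring
  · rw [Tw, c1f, Finset.card_insert_of_notMem hfA, Finset.prod_insert hfA,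
      Finset.prod_insert heRA]
    ring
  · rw [Tw, c1e, Finset.card_insert_of_notMem heA, Finset.prod_insert heA,
      Finset.prod_insert hfRA]
    ring
  · rw [Tw, c2, Finset.card_insert_of_notMem heFA, Finset.card_insert_of_notMem hfA,
      Finset.prod_insert heFA, Finset.prod_insert hfA]
    have e1 : A.card + 1 + 1 = A.card + 2 := by omega
    rw [e1]
    ring


lemma decompZ {n : ℕ} (q : ℕ → ℝ) (p : Fin n → ℝ) {e f : Fin n} (hef : e ≠ f) :
    ∑ S : Finset (Fin n), Tw n q p S
      = (1 - p e) * (1 - p f) * Fc n q p (univ \ {e, f}) 0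
        + ((1 - p e) * p f + p e * (1 - p f)) * Fc n q p (univ \ {e, f}) 1
        + p e * p f * Fc n q p (univ \ {e, f}) 2 := by
  rw [sum_finset_decomp n e f hef]
  have step : ∀ A ∈ ((univ \ {e, f} : Finset (Fin n))).powerset,
      Tw n q p A + Tw n q p (insert f A)
        + (Tw n q p (insert e A) + Tw n q p (insert e (insert f A)))
      = (1 - p e) * (1 - p f) *
          (Qext n q (A.card + 0) * (∏ i ∈ A, p i) * ∏ i ∈ (univ \ {e, f}) \ A, (1 - p i))
        + ((1 - p e) * p f + p e * (1 - p f)) *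
          (Qext n q (A.card + 1) * (∏ i ∈ A, p i) * ∏ i ∈ (univ \ {e, f}) \ A, (1 - p i))
        + p e * p f *
          (Qext n q (A.card + 2) * (∏ i ∈ A, p i) * ∏ i ∈ (univ \ {e, f}) \ A, (1 - p i)) := by
    intro A hA
    obtain ⟨t0, t1, t2, t3⟩ := Tvals q p hef (Finset.mem_powerset.1 hA)
    rw [t0, t1, t2, t3]
    simp only [Nat.add_zero]
    ring
  rw [Finset.sum_congr rfl step]
  unfold Fc
  rw [Finset.mul_sum, Finset.mul_sum, Finset.mul_sum, Finset.sum_add_distrib,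
    Finset.sum_add_distrib]

lemma decompSe {n : ℕ} (q : ℕ → ℝ) (p : Fin n → ℝ) {e f : Fin n} (hef : e ≠ f) :
    ∑ S : Finset (Fin n), (if e ∈ S then Tw n q p S else 0)
      = p e * (1 - p f) * Fc n q p (univ \ {e, f}) 1
        + p e * p f * Fc n q p (univ \ {e, f}) 2 := by
  rw [sum_finset_decomp n e f hef]
  have step : ∀ A ∈ ((univ \ {e, f} : Finset (Fin n))).powerset,
      (if e ∈ A then Tw n q p A else 0) + (if e ∈ insert f A then Tw n q p (insert f A) else 0)
        + ((if e ∈ insert e A then Tw n q p (insert e A) else 0)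
          + (if e ∈ insert e (insert f A) then Tw n q p (insert e (insert f A)) else 0))
      = p e * (1 - p f) *
          (Qext n q (A.card + 1) * (∏ i ∈ A, p i) * ∏ i ∈ (univ \ {e, f}) \ A, (1 - p i))
        + p e * p f *
          (Qext n q (A.card + 2) * (∏ i ∈ A, p i) * ∏ i ∈ (univ \ {e, f}) \ A, (1 - p i)) := by
    intro A hA
    have hA' := Finset.mem_powerset.1 hA
    have heA : e ∉ A := fun h => by simpa using hA' h
    have heFA : e ∉ insert f A := by simp [hef, heA]
    obtain ⟨t0, t1, t2, t3⟩ := Tvals q p hef hA'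
    rw [if_neg heA, if_neg heFA, if_pos (Finset.mem_insert_self e A),
      if_pos (Finset.mem_insert_self e (insert f A)), t2, t3]
    ring
  rw [Finset.sum_congr rfl step]
  unfold Fc
  rw [Finset.mul_sum, Finset.mul_sum, Finset.sum_add_distrib]

lemma decompSf {n : ℕ} (q : ℕ → ℝ) (p : Fin n → ℝ) {e f : Fin n} (hef : e ≠ f) :
    ∑ S : Finset (Fin n), (if f ∈ S then Tw n q p S else 0)
      = (1 - p e) * p f * Fc n q p (univ \ {e, f}) 1
        + p e * p f * Fc n q p (univ \ {e, f}) 2 := by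
  rw [sum_finset_decomp n e f hef]
  have step : ∀ A ∈ ((univ \ {e, f} : Finset (Fin n))).powerset,
      (if f ∈ A then Tw n q p A else 0) + (if f ∈ insert f A then Tw n q p (insert f A) else 0)
        + ((if f ∈ insert e A then Tw n q p (insert e A) else 0)
          + (if f ∈ insert e (insert f A) then Tw n q p (insert e (insert f A)) else 0))
      = (1 - p e) * p f *
          (Qext n q (A.card + 1) * (∏ i ∈ A, p i) * ∏ i ∈ (univ \ {e, f}) \ A, (1 - p i))
        + p e * p f *
          (Qext n q (A.card + 2) * (∏ i ∈ A, p i) * ∏ i ∈ (univ \ {e, f}) \ A, (1 - p i)) := by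
    intro A hA
    have hA' := Finset.mem_powerset.1 hA
    have hfA : f ∉ A := fun h => by simpa using hA' h
    have hfEA : f ∉ insert e A := by simp [Ne.symm hef, hfA]
    obtain ⟨t0, t1, t2, t3⟩ := Tvals q p hef hA'
    rw [if_neg hfA, if_pos (Finset.mem_insert_self f A), if_neg hfEA,
      if_pos (Finset.mem_insert_of_mem (Finset.mem_insert_self f A)), t1, t3]
    ring
  rw [Finset.sum_congr rfl step]
  unfold Fc
  rw [Finset.mul_sum, Finset.mul_sum, Finset.sum_add_distrib]

lemma decompSef {n : ℕ} (q : ℕ → ℝ) (p : Fin n → ℝ) {e f : Fin n} (hef : e ≠ f) :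
    ∑ S : Finset (Fin n), (if e ∈ S ∧ f ∈ S then Tw n q p S else 0)
      = p e * p f * Fc n q p (univ \ {e, f}) 2 := by
  rw [sum_finset_decomp n e f hef]
  have step : ∀ A ∈ ((univ \ {e, f} : Finset (Fin n))).powerset,
      (if e ∈ A ∧ f ∈ A then Tw n q p A else 0)
        + (if e ∈ insert f A ∧ f ∈ insert f A then Tw n q p (insert f A) else 0)
        + ((if e ∈ insert e A ∧ f ∈ insert e A then Tw n q p (insert e A) else 0)
          + (if e ∈ insert e (insert f A) ∧ f ∈ insert e (insert f A) then
              Tw n q p (insert e (insert f A)) else 0))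
      = p e * p f *
          (Qext n q (A.card + 2) * (∏ i ∈ A, p i) * ∏ i ∈ (univ \ {e, f}) \ A, (1 - p i)) := by
    intro A hA
    have hA' := Finset.mem_powerset.1 hA
    have heA : e ∉ A := fun h => by simpa using hA' h
    have hfA : f ∉ A := fun h => by simpa using hA' h
    have heFA : e ∉ insert f A := by simp [hef, heA]
    have hfEA : f ∉ insert e A := by simp [Ne.symm hef, hfA]
    obtain ⟨t0, t1, t2, t3⟩ := Tvals q p hef hA'
    rw [if_neg (fun h => heA h.1), if_neg (fun h => heFA h.1), if_neg (fun h => hfEA h.2),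
      if_pos ⟨Finset.mem_insert_self e (insert f A),
        Finset.mem_insert_of_mem (Finset.mem_insert_self f A)⟩, t3]
    ring
  rw [Finset.sum_congr rfl step]
  unfold Fc
  rw [Finset.mul_sum]

lemma final_algebra (a b B0 B1 B2 Z : ℝ) (ha0 : 0 < a) (ha1 : a < 1) (hb0 : 0 < b)
    (hb1 : b < 1) (hB0 : 0 ≤ B0) (hB1 : 0 ≤ B1) (hB2 : 0 ≤ B2)
    (hkey : B0 * B2 ≤ B1 ^ 2)
    (hZdef : Z = (1 - a) * (1 - b) * B0 + ((1 - a) * b + a * (1 - b)) * B1 + a * b * B2)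
    (hZpos : 0 < Z) :
    a * b * B2 / Z ≤ (a * (1 - b) * B1 + a * b * B2) / Z * (((1 - a) * b * B1 + a * b * B2) / Z) := by
  rw [div_mul_div_comm, div_le_div_iff₀ hZpos (mul_pos hZpos hZpos)]
  have hcoef : 0 ≤ a * b * (1 - a) * (1 - b) :=
    mul_nonneg (mul_nonneg (mul_nonneg ha0.le hb0.le) (by linarith)) (by linarith)
  have hmain : a * b * B2 * Z ≤ (a * (1 - b) * B1 + a * b * B2) * ((1 - a) * b * B1 + a * b * B2) := by
    rw [hZdef]
    nlinarith [mul_le_mul_of_nonneg_left hkey hcoef]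
  nlinarith [mul_le_mul_of_nonneg_right hmain hZpos.le]

end Stmt19Aux

/-- Rank rescaling of a product of Bernoullis: let `q_0,…,q_n` be a nonnegative
log-concave sequence with interval support and `p_e ∈ (0,1)`, and let
`μ(η) = C q_{|η|} Π_e p_e^{η(e)} (1-p_e)^{1-η(e)}`.  Then any two distinct coordinates are
negatively correlated under `μ`: `E[X_e X_f] ≤ E[X_e] E[X_f]`. -/
theorem stmt_19 (n : ℕ) (q : ℕ → ℝ) (p : Fin n → ℝ)
    (hq0 : ∀ k, 0 ≤ q k)
    (hlc1 : ∀ j, j + 2 ≤ n → q j * q (j + 2) ≤ q (j + 1) ^ 2)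
    (hlc2 : ∀ i j k, i ≤ j → j ≤ k → k ≤ n → 0 < q i → 0 < q k → 0 < q j)
    (hp : ∀ i, 0 < p i ∧ p i < 1)
    (e f : Fin n) (hef : e ≠ f)
    (hZ : 0 < ∑ η : Fin n → Bool, q (rankB η) * ∏ i, (if η i then p i else 1 - p i)) :
    (∑ η ∈ univ.filter (fun η : Fin n → Bool => η e = true ∧ η f = true),
        q (rankB η) * ∏ i, (if η i then p i else 1 - p i))
      / (∑ η : Fin n → Bool, q (rankB η) * ∏ i, (if η i then p i else 1 - p i))
    ≤ ((∑ η ∈ univ.filter (fun η : Fin n → Bool => η e = true),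
          q (rankB η) * ∏ i, (if η i then p i else 1 - p i))
        / (∑ η : Fin n → Bool, q (rankB η) * ∏ i, (if η i then p i else 1 - p i)))
      * ((∑ η ∈ univ.filter (fun η : Fin n → Bool => η f = true),
          q (rankB η) * ∏ i, (if η i then p i else 1 - p i))
        / (∑ η : Fin n → Bool, q (rankB η) * ∏ i, (if η i then p i else 1 - p i))) := by
  open Stmt19Aux in
  have HQ : LC (Qext n q) := LC_Qext n q hq0 hlc1 hlc2
  have HF : LC (Fc n q p (univ \ {e, f})) := LC_Fc q p HQ hp (univ \ {e, f})
  -- pointwise weight identity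
  have hwT : ∀ η : Fin n → Bool,
      q (rankB η) * ∏ i, (if η i then p i else 1 - p i)
        = Tw n q p (univ.filter fun i => η i = true) := by
    intro η
    have hcard : (univ.filter fun i => η i = true).card ≤ n :=
      le_trans (Finset.card_filter_le _ _) (by simp)
    rw [Finset.prod_ite, Finset.filter_not, Tw]
    simp only [Qext, if_pos hcard, rankB]
    ring
  -- the four sum identities
  have hZeq : (∑ η : Fin n → Bool, q (rankB η) * ∏ i, (if η i then p i else 1 - p i))
      = (1 - p e) * (1 - p f) * Fc n q p (univ \ {e, f}) 0
        + ((1 - p e) * p f + p e * (1 - p f)) * Fc n q p (univ \ {e, f}) 1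
        + p e * p f * Fc n q p (univ \ {e, f}) 2 := by
    rw [← decompZ q p hef, ← sum_eta_eq n (Tw n q p)]
    exact Finset.sum_congr rfl fun η _ => hwT η
  have hSeeq : (∑ η ∈ univ.filter (fun η : Fin n → Bool => η e = true),
        q (rankB η) * ∏ i, (if η i then p i else 1 - p i))
      = p e * (1 - p f) * Fc n q p (univ \ {e, f}) 1
        + p e * p f * Fc n q p (univ \ {e, f}) 2 := by
    rw [← decompSe q p hef, ← sum_eta_eq n (fun S => if e ∈ S then Tw n q p S else 0),
      Finset.sum_filter]
    refine Finset.sum_congr rfl fun η _ => ?_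
    by_cases hη : η e = true
    · rw [if_pos hη, if_pos (by simpa using hη)]
      exact hwT η
    · rw [if_neg hη, if_neg (by simpa using hη)]
  have hSfeq : (∑ η ∈ univ.filter (fun η : Fin n → Bool => η f = true),
        q (rankB η) * ∏ i, (if η i then p i else 1 - p i))
      = (1 - p e) * p f * Fc n q p (univ \ {e, f}) 1
        + p e * p f * Fc n q p (univ \ {e, f}) 2 := by
    rw [← decompSf q p hef, ← sum_eta_eq n (fun S => if f ∈ S then Tw n q p S else 0),
      Finset.sum_filter]
    refine Finset.sum_congr rfl fun η _ => ?_
    by_cases hη : η f = true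
    · rw [if_pos hη, if_pos (by simpa using hη)]
      exact hwT η
    · rw [if_neg hη, if_neg (by simpa using hη)]
  have hSefeq : (∑ η ∈ univ.filter (fun η : Fin n → Bool => η e = true ∧ η f = true),
        q (rankB η) * ∏ i, (if η i then p i else 1 - p i))
      = p e * p f * Fc n q p (univ \ {e, f}) 2 := by
    rw [← decompSef q p hef,
      ← sum_eta_eq n (fun S => if e ∈ S ∧ f ∈ S then Tw n q p S else 0),
      Finset.sum_filter]
    refine Finset.sum_congr rfl fun η _ => ?_
    by_cases hη : η e = true ∧ η f = true
    · rw [if_pos hη, if_pos (by simpa using hη)]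
      exact hwT η
    · rw [if_neg hη, if_neg (by simpa using hη)]
  rw [hZeq] at hZ
  rw [hZeq, hSeeq, hSfeq, hSefeq]
  have hkey : Fc n q p (univ \ {e, f}) 0 * Fc n q p (univ \ {e, f}) 2
      ≤ Fc n q p (univ \ {e, f}) 1 ^ 2 := by simpa using HF.2.1 0
  exact final_algebra (p e) (p f) _ _ _ _ (hp e).1 (hp e).2 (hp f).1 (hp f).2
    (HF.1 0) (HF.1 1) (HF.1 2) hkey rfl hZ
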